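/- Let U ∈ L²((-∞,R]) and V ∈ L²([R,∞)) for all R ∈ ℝ, and suppose sup_{r∈ℝ} (∫_{-∞}^r |U(x)|² dx)(∫_r^∞ |V(x)|² dx) < ∞. Then there exists a finite constant C > 0 such that for all f ∈ L²(ℝ), ∫_ℝ |U(x) ∫_x^∞ V(x')f(x') dx'|² dx ≤ C ∫_ℝ |f(x)|² dx. -/

import Mathlib

open MeasureTheory Set
open scoped ENNReal NNReal


/-- If the forward integral vanishes at `y`, then `g` vanishes a.e. there. -/
lemma ae_zero_of_Ici_zero (g : ℝ → ℝ≥0∞) (hg : Measurable g) :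
    ∀ᵐ y : ℝ, (∫⁻ z in Set.Ici y, g z) = 0 → g y = 0 := by
  set B : ℝ → ℝ≥0∞ := fun y => ∫⁻ z in Set.Ici y, g z with hBdef
  have hanti : Antitone B := fun a b hab =>
    lintegral_mono_set (Set.Ici_subset_Ici.mpr hab)
  have hq : ∀ q : ℚ, B q = 0 → ∀ᵐ y : ℝ, y ∈ Set.Ici (q:ℝ) → g y = 0 := by
    intro q h0
    have := (lintegral_eq_zero_iff hg).mp h0
    exact (ae_restrict_iff' measurableSet_Ici).mp this
  have hall : ∀ᵐ y : ℝ, ∀ q : ℚ, B q = 0 → (q:ℝ) ≤ y → g y = 0 := by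
    rw [ae_all_iff]
    intro q
    by_cases h : B q = 0
    · filter_upwards [hq q h] with y hy _ hqy using hy hqy
    · filter_upwards with y h' using absurd h' h
  rw [ae_iff]
  have hsub : {y : ℝ | ¬ (B y = 0 → g y = 0)} ⊆
      {y : ℝ | ¬ ∀ q : ℚ, B q = 0 → (q:ℝ) ≤ y → g y = 0} ∪
      {y : ℝ | B y = 0 ∧ ∀ q : ℚ, (q:ℝ) ≤ y → B q ≠ 0} := by
    intro y hy
    simp only [Set.mem_setOf_eq, _root_.not_imp] at hy
    by_cases hAll : ∀ q : ℚ, B q = 0 → (q:ℝ) ≤ y → g y = 0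
    · right
      refine ⟨hy.1, fun q hqy hq0 => hy.2 (hAll q hq0 hqy)⟩
    · left; exact hAll
  have hS : ({y : ℝ | B y = 0 ∧ ∀ q : ℚ, (q:ℝ) ≤ y → B q ≠ 0} : Set ℝ).Subsingleton := by
    intro y₁ h₁ y₂ h₂
    by_contra hne
    rcases Ne.lt_or_gt hne with h | h
    · obtain ⟨q, hq1, hq2⟩ := exists_rat_btwn h
      exact h₂.2 q hq2.le (le_antisymm (le_trans (hanti hq1.le) h₁.1.le) zero_le)
    · obtain ⟨q, hq1, hq2⟩ := exists_rat_btwn h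
      exact h₁.2 q hq2.le (le_antisymm (le_trans (hanti hq1.le) h₂.1.le) zero_le)
  refine measure_mono_null hsub (measure_union_null ?_ (hS.measure_zero _))
  rw [← ae_iff] at *
  exact hall



/-- Key lemma: `∫_{[x,∞)} g (∫_{[y,∞)} g)^{-1/2} dy ≤ 4 (∫_{[x,∞)} g)^{1/2}`. -/
lemma key_Ici (g : ℝ → ℝ≥0∞) (hg : Measurable g) (x : ℝ) :
    ∫⁻ y in Set.Ici x, g y * (∫⁻ z in Set.Ici y, g z) ^ (-(1/2) : ℝ)
      ≤ 4 * (∫⁻ z in Set.Ici x, g z) ^ ((1/2) : ℝ) := by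
  classical
  set B : ℝ → ℝ≥0∞ := fun y => ∫⁻ z in Set.Ici y, g z with hBdef
  show ∫⁻ y in Set.Ici x, g y * (B y) ^ (-(1/2) : ℝ) ≤ 4 * (B x) ^ ((1/2) : ℝ)
  have hanti : Antitone B := fun a b hab =>
    lintegral_mono_set (Set.Ici_subset_Ici.mpr hab)
  have hBm : Measurable B := hanti.measurable
  set t : ℝ≥0∞ := B x with htdef
  rcases eq_or_ne t ∞ with ht | htop
  · rw [ht]
    simp [ENNReal.top_rpow_of_pos (by norm_num : (0:ℝ) < 1/2)]
  rcases eq_or_ne t 0 with ht0 | ht0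
  · have hz : ∀ᵐ y ∂(volume.restrict (Set.Ici x)), g y * (B y) ^ (-(1/2) : ℝ) = 0 := by
      filter_upwards [ae_restrict_of_ae (ae_zero_of_Ici_zero g hg),
        ae_restrict_mem measurableSet_Ici] with y hy hyx
      have hBy : B y = 0 := le_antisymm (ht0 ▸ hanti hyx) zero_le
      rw [hy hBy, zero_mul]
    calc ∫⁻ y in Set.Ici x, g y * (B y) ^ (-(1/2) : ℝ)
        = 0 := lintegral_eq_zero_iff ((hg.mul (hBm.pow_const _))) |>.mpr hz
      _ ≤ _ := zero_le
  -- main case : 0 < t < ∞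
  set S : ℕ → Set ℝ := fun i =>
    {y | x ≤ y ∧ (2⁻¹ : ℝ≥0∞) ^ (2 * (i + 1)) * t < B y ∧ B y ≤ (2⁻¹ : ℝ≥0∞) ^ (2 * i) * t}
    with hSdef
  have hSmeas : ∀ i, MeasurableSet (S i) := by
    intro i
    have : S i = Set.Ici x ∩ B ⁻¹' (Set.Ioc ((2⁻¹ : ℝ≥0∞) ^ (2 * (i + 1)) * t)
        ((2⁻¹ : ℝ≥0∞) ^ (2 * i) * t)) := by
      ext y; simp [hSdef, Set.mem_setOf_eq, and_assoc]
    rw [this]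
    exact measurableSet_Ici.inter (hBm measurableSet_Ioc)
  -- band mass bound
  have hband : ∀ i : ℕ, ∫⁻ y in S i, g y ≤ (2⁻¹ : ℝ≥0∞) ^ (2 * i) * t := by
    intro i
    set T : Set ℝ := {y | x ≤ y ∧ B y ≤ (2⁻¹ : ℝ≥0∞) ^ (2 * i) * t} with hTdef
    have hST : S i ⊆ T := fun y hy => ⟨hy.1, hy.2.2⟩
    rcases T.eq_empty_or_nonempty with hT | hT
    · have : S i = ∅ := Set.eq_empty_of_subset_empty (hT ▸ hST)
      simp [this]
    · have hbdd : BddBelow T := ⟨x, fun y hy => hy.1⟩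
      set s : ℝ := sInf T with hsdef
      have hTs : T ⊆ Set.Ici s := fun y hy => csInf_le hbdd hy
      have h1 : ∫⁻ y in S i, g y ≤ B s :=
        lintegral_mono_set (subset_trans hST hTs)
      refine h1.trans ?_
      -- show B s ≤ bound by right continuity
      have hBs : B s = (volume.withDensity g) (Set.Ioi s) := by
        rw [withDensity_apply g measurableSet_Ioi]
        exact (setLIntegral_congr (μ := volume) (Ioi_ae_eq_Ici (a := s))).symm
      rw [hBs]
      have hunion : Set.Ioi s = ⋃ n : ℕ, Set.Ici (s + 1/(n+1)) := by
        ext y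
        simp only [Set.mem_Ioi, Set.mem_iUnion, Set.mem_Ici]
        constructor
        · intro hy
          obtain ⟨n, hn⟩ := exists_nat_one_div_lt (sub_pos.mpr hy)
          exact ⟨n, by linarith⟩
        · rintro ⟨n, hn⟩
          have : (0:ℝ) < 1/(n+1) := by positivity
          linarith
      have hdir : Directed (fun x1 x2 => x1 ⊆ x2) (fun n : ℕ => Set.Ici (s + 1/(n+1))) := by
        intro m n
        rcases le_total m n with h | h
        · exact ⟨n, Set.Ici_subset_Ici.mpr (by
            have : 1/((n:ℝ)+1) ≤ 1/((m:ℝ)+1) := by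
              apply one_div_le_one_div_of_le (by positivity) (by exact_mod_cast by linarith)
            linarith), le_refl _⟩
        · exact ⟨m, le_refl _, Set.Ici_subset_Ici.mpr (by
            have : 1/((m:ℝ)+1) ≤ 1/((n:ℝ)+1) := by
              apply one_div_le_one_div_of_le (by positivity) (by exact_mod_cast by linarith)
            linarith)⟩
      rw [hunion, hdir.measure_iUnion]
      refine iSup_le fun n => ?_
      rw [withDensity_apply g measurableSet_Ici]
      -- s + 1/(n+1) is ≥ some element of T, hence "in T" by upward closedness
      have hpos : (0:ℝ) < 1/(n+1) := by positivity
      obtain ⟨y, hyT, hy⟩ := Real.lt_sInf_add_pos hT hpos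
      have hyx : x ≤ y := hyT.1
      calc ∫⁻ z in Set.Ici (s + 1/(n+1)), g z
          ≤ B y := by
            apply lintegral_mono_set
            apply Set.Ici_subset_Ici.mpr
            have := csInf_le hbdd hyT
            linarith [hy]
        _ ≤ (2⁻¹ : ℝ≥0∞) ^ (2 * i) * t := hyT.2
  have h2ne0 : (2:ℝ≥0∞) ≠ 0 := by norm_num
  have h2netop : (2:ℝ≥0∞) ≠ ∞ := by norm_num
  have hpow : ∀ n : ℕ, (2⁻¹ : ℝ≥0∞) ^ n = (2:ℝ≥0∞) ^ (-(n:ℝ)) := by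
    intro n
    rw [← ENNReal.rpow_natCast (2⁻¹ : ℝ≥0∞) n, ENNReal.inv_rpow, ← ENNReal.rpow_neg]
  -- the indicator majorant
  set h : ℕ → ℝ → ℝ≥0∞ :=
    fun i => (S i).indicator (fun y => (2:ℝ≥0∞) ^ ((i:ℝ)+1) * t ^ (-(1/2) : ℝ) * g y)
    with hhdef
  have hhmeas : ∀ i, Measurable (h i) :=
    fun i => (Measurable.const_mul hg _).indicator (hSmeas i)
  have hpt : ∀ᵐ y ∂(volume.restrict (Set.Ici x)),
      g y * (B y) ^ (-(1/2) : ℝ) ≤ ∑' i, h i y := by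
    filter_upwards [ae_restrict_of_ae (ae_zero_of_Ici_zero g hg),
      ae_restrict_mem measurableSet_Ici] with y hy0 hyx
    rcases eq_or_ne (B y) 0 with hBy | hBy
    · rw [hy0 hBy, zero_mul]; exact zero_le
    · -- find the band
      have hexists : ∃ i : ℕ, (2⁻¹ : ℝ≥0∞) ^ (2 * (i + 1)) * t < B y := by
        obtain ⟨n, hn⟩ := ENNReal.exists_inv_two_pow_lt (a := B y * t⁻¹)
          (mul_ne_zero hBy (ENNReal.inv_ne_zero.mpr htop))
        refine ⟨n, ?_⟩
        have h1 : (2⁻¹ : ℝ≥0∞) ^ (2 * (n + 1)) ≤ (2⁻¹ : ℝ≥0∞) ^ n :=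
          pow_le_pow_of_le_one zero_le (by norm_num) (by omega)
        calc (2⁻¹ : ℝ≥0∞) ^ (2 * (n + 1)) * t ≤ (2⁻¹ : ℝ≥0∞) ^ n * t :=
              mul_le_mul_left h1 t
          _ < (B y * t⁻¹) * t := by
              exact ENNReal.mul_lt_mul_left ht0 htop hn
          _ = B y := by
              rw [mul_assoc, ENNReal.inv_mul_cancel ht0 htop, mul_one]
      set i : ℕ := Nat.find hexists with hidef
      have hi1 : (2⁻¹ : ℝ≥0∞) ^ (2 * (i + 1)) * t < B y := Nat.find_spec hexists
      have hi2 : B y ≤ (2⁻¹ : ℝ≥0∞) ^ (2 * i) * t := by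
        rcases Nat.eq_zero_or_pos i with h0 | h0
        · rw [h0]
          simpa using (hanti hyx : B y ≤ t)
        · have := Nat.find_min hexists (m := i - 1) (by omega)
          push_neg at this
          have : (2⁻¹ : ℝ≥0∞) ^ (2 * (i - 1 + 1)) * t = (2⁻¹ : ℝ≥0∞) ^ (2 * i) * t := by
            congr 2
            omega
          rw [← this]
          exact Nat.find_min hexists (m := i - 1) (by omega) |> not_lt.mp
      have hyS : y ∈ S i := ⟨hyx, hi1, hi2⟩
      refine le_trans ?_ (ENNReal.le_tsum i)
      have hval : h i y = (2:ℝ≥0∞) ^ ((i:ℝ)+1) * t ^ (-(1/2) : ℝ) * g y := by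
        rw [hhdef]; exact Set.indicator_of_mem hyS _
      rw [hval]
      have hBinv : (B y) ^ (-(1/2) : ℝ) ≤ (2:ℝ≥0∞) ^ ((i:ℝ)+1) * t ^ (-(1/2) : ℝ) := by
        have h2a : ((2:ℝ≥0∞) ^ (-((2*(i+1):ℕ):ℝ))) ≠ 0 :=
          (ENNReal.rpow_pos (by norm_num) h2netop).ne'
        have h1 : ((2⁻¹ : ℝ≥0∞) ^ (2 * (i + 1)) * t) ^ (-(1/2) : ℝ)
            = (2:ℝ≥0∞) ^ ((i:ℝ)+1) * t ^ (-(1/2) : ℝ) := by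
          rw [hpow (2*(i+1)), ENNReal.mul_rpow_of_ne_zero h2a ht0, ← ENNReal.rpow_mul]
          congr 1
          push_cast; ring
        calc (B y) ^ (-(1/2) : ℝ)
            ≤ ((2⁻¹ : ℝ≥0∞) ^ (2 * (i + 1)) * t) ^ (-(1/2) : ℝ) := by
              rw [ENNReal.rpow_neg, ENNReal.rpow_neg]
              exact ENNReal.inv_le_inv.mpr (ENNReal.rpow_le_rpow hi1.le (by norm_num))
          _ = _ := h1
      calc g y * (B y) ^ (-(1/2) : ℝ)
          ≤ g y * ((2:ℝ≥0∞) ^ ((i:ℝ)+1) * t ^ (-(1/2) : ℝ)) := mul_le_mul_right hBinv _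
        _ = (2:ℝ≥0∞) ^ ((i:ℝ)+1) * t ^ (-(1/2) : ℝ) * g y := mul_comm _ _
  have hr : ∀ a b : ℝ, (2:ℝ≥0∞)^a * 2^b = 2^(a+b) :=
    fun a b => (ENNReal.rpow_add a b h2ne0 h2netop).symm
  have htr : ∀ a b : ℝ, t^a * t^b = t^(a+b) :=
    fun a b => (ENNReal.rpow_add a b ht0 htop).symm
  calc ∫⁻ y in Set.Ici x, g y * (B y) ^ (-(1/2) : ℝ)
      ≤ ∫⁻ y in Set.Ici x, ∑' i, h i y := lintegral_mono_ae hpt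
    _ ≤ ∫⁻ y, ∑' i, h i y := setLIntegral_le_lintegral _ _
    _ = ∑' i, ∫⁻ y, h i y := lintegral_tsum (fun i => (hhmeas i).aemeasurable)
    _ ≤ ∑' i : ℕ, ((2:ℝ≥0∞) ^ ((i:ℝ)+1) * t ^ (-(1/2) : ℝ)) * ((2⁻¹ : ℝ≥0∞) ^ (2*i) * t) := by
        refine ENNReal.tsum_le_tsum fun i => ?_
        rw [hhdef]
        beta_reduce
        rw [lintegral_indicator (hSmeas i), lintegral_const_mul _ hg]
        exact mul_le_mul_right (hband i) _
    _ = ∑' i : ℕ, (2 * t ^ ((1/2):ℝ)) * (2⁻¹ : ℝ≥0∞) ^ i := by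
        refine tsum_congr fun i => ?_
        rw [hpow (2*i), hpow i]
        calc (2:ℝ≥0∞)^((i:ℝ)+1) * t^(-(1/2):ℝ) * ((2:ℝ≥0∞)^(-((2*i:ℕ):ℝ)) * t)
            = ((2:ℝ≥0∞)^((i:ℝ)+1) * 2^(-((2*i:ℕ):ℝ))) * (t^(-(1/2):ℝ) * t^(1:ℝ)) := by
              rw [ENNReal.rpow_one]; ring
          _ = (2:ℝ≥0∞)^(((i:ℝ)+1) + (-((2*i:ℕ):ℝ))) * t^((-(1/2)) + 1 : ℝ) := by
              rw [hr, htr]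
          _ = (2:ℝ≥0∞)^((1:ℝ) + (-(i:ℝ))) * t^((1/2):ℝ) := by
              have e : ((i:ℝ)+1) + (-((2*i:ℕ):ℝ)) = (1:ℝ) + (-(i:ℝ)) := by push_cast; ring
              rw [e]; norm_num
          _ = ((2:ℝ≥0∞)^(1:ℝ) * 2^(-(i:ℝ))) * t^((1/2):ℝ) := by rw [hr]
          _ = 2 * t ^ ((1/2):ℝ) * (2:ℝ≥0∞)^(-(i:ℝ)) := by rw [ENNReal.rpow_one]; ring
    _ = (2 * t ^ ((1/2):ℝ)) * (1 - 2⁻¹ : ℝ≥0∞)⁻¹ := by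
        rw [ENNReal.tsum_mul_left, ENNReal.tsum_geometric]
    _ = 4 * t ^ ((1/2):ℝ) := by
        have : (1 - 2⁻¹ : ℝ≥0∞) = 2⁻¹ := by
          rw [ENNReal.sub_eq_of_eq_add (by norm_num)]
          rw [ENNReal.inv_two_add_inv_two]
        rw [this, inv_inv]
        ring



lemma lint_neg_Ici (g : ℝ → ℝ≥0∞) (a : ℝ) :
    ∫⁻ z in Set.Ici a, g (-z) = ∫⁻ z in Set.Iic (-a), g z := by
  rw [(Measure.measurePreserving_neg (volume : Measure ℝ)).setLIntegral_comp_emb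
    (MeasurableEquiv.neg ℝ).measurableEmbedding g (Set.Ici a)]
  have himg : Neg.neg '' Set.Ici a = Set.Iic (-a) := by
    ext y
    constructor
    · rintro ⟨z, hz, rfl⟩; simpa using hz
    · intro hy; exact ⟨-y, by simp only [Set.mem_Ici]; linarith [Set.mem_Iic.mp hy], by simp⟩
  rw [himg]

lemma ae_zero_of_Iic_zero (g : ℝ → ℝ≥0∞) (hg : Measurable g) :
    ∀ᵐ y : ℝ, (∫⁻ z in Set.Iic y, g z) = 0 → g y = 0 := by
  have hg' : Measurable (fun z : ℝ => g (-z)) := hg.comp measurable_neg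
  have h := ae_zero_of_Ici_zero (fun z : ℝ => g (-z)) hg'
  have hanti : Antitone (fun y : ℝ => ∫⁻ z in Set.Ici y, g (-z)) := fun a b hab =>
    lintegral_mono_set (Set.Ici_subset_Ici.mpr hab)
  have hbadm : MeasurableSet {y : ℝ | ¬ ((∫⁻ z in Set.Ici y, g (-z)) = 0 → g (-y) = 0)} := by
    have : {y : ℝ | ¬ ((∫⁻ z in Set.Ici y, g (-z)) = 0 → g (-y) = 0)}
        = {y : ℝ | (∫⁻ z in Set.Ici y, g (-z)) = 0} ∩ {y : ℝ | g (-y) ≠ 0} := by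
      ext y; simp [Classical.not_imp]
    rw [this]
    exact (hanti.measurable (measurableSet_singleton 0)).inter
      ((hg'.comp measurable_id) (measurableSet_singleton 0).compl)
  rw [ae_iff] at h ⊢
  have hset : {y : ℝ | ¬ ((∫⁻ z in Set.Iic y, g z) = 0 → g y = 0)}
      = Neg.neg ⁻¹' {y : ℝ | ¬ ((∫⁻ z in Set.Ici y, g (-z)) = 0 → g (-y) = 0)} := by
    ext y
    simp only [Set.mem_preimage, Set.mem_setOf_eq]
    rw [lint_neg_Ici g (-y), neg_neg]
  rw [hset, (Measure.measurePreserving_neg (volume : Measure ℝ)).measure_preimage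
    hbadm.nullMeasurableSet]
  exact h

lemma key_Iic (g : ℝ → ℝ≥0∞) (hg : Measurable g) (x : ℝ) :
    ∫⁻ y in Set.Iic x, g y * (∫⁻ z in Set.Iic y, g z) ^ (-(1/2) : ℝ)
      ≤ 4 * (∫⁻ z in Set.Iic x, g z) ^ ((1/2) : ℝ) := by
  have hg' : Measurable (fun z : ℝ => g (-z)) := hg.comp measurable_neg
  have h := key_Ici (fun z : ℝ => g (-z)) hg' (-x)
  have e1 : ∫⁻ y in Set.Ici (-x), g (-y) * (∫⁻ z in Set.Ici y, g (-z)) ^ (-(1/2) : ℝ)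
      = ∫⁻ y in Set.Iic x, g y * (∫⁻ z in Set.Iic y, g z) ^ (-(1/2) : ℝ) := by
    have e2 : ∀ y : ℝ, g (-y) * (∫⁻ z in Set.Ici y, g (-z)) ^ (-(1/2) : ℝ)
        = (fun w => g w * (∫⁻ z in Set.Iic w, g z) ^ (-(1/2) : ℝ)) (-y) := by
      intro y
      simp only
      rw [lint_neg_Ici g y]
    calc ∫⁻ y in Set.Ici (-x), g (-y) * (∫⁻ z in Set.Ici y, g (-z)) ^ (-(1/2) : ℝ)
        = ∫⁻ y in Set.Ici (-x),
            (fun w => g w * (∫⁻ z in Set.Iic w, g z) ^ (-(1/2) : ℝ)) (-y) := by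
          apply lintegral_congr; intro y; exact e2 y
      _ = ∫⁻ y in Set.Iic (-(-x)), g y * (∫⁻ z in Set.Iic y, g z) ^ (-(1/2) : ℝ) :=
          lint_neg_Ici (fun w => g w * (∫⁻ z in Set.Iic w, g z) ^ (-(1/2) : ℝ)) (-x)
      _ = _ := by rw [neg_neg]
  rw [e1, lint_neg_Ici g (-x), neg_neg] at h
  exact h



-- helper: nnnorm of square
lemma nnnorm_sq_eq (z : ℂ) : ((‖(‖z‖^2)‖₊ : ℝ≥0) : ℝ≥0∞) = ((‖z‖₊ : ℝ≥0∞))^2 := by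
  rw [nnnorm_pow, nnnorm_norm, ENNReal.coe_pow]

lemma rpow_two_eq (z : ℝ≥0∞) : z ^ (2:ℝ) = z ^ (2:ℕ) := by
  rw [← ENNReal.rpow_natCast z 2]; norm_num

/-- Talenti–Tomaselli–Muckenhoupt criterion, direction (iii) ⟹ (i):
if `U ∈ L²((-∞,R])`, `V ∈ L²([R,∞))` for all `R` and
`sup_r (∫_{-∞}^r |U|²)(∫_r^∞ |V|²) < ∞`, then the weighted Hardy inequality holds. -/
theorem muckenhoupt_hardy (U V : ℝ → ℂ)
    (hUm : Measurable U) (hVm : Measurable V)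
    (hU : ∀ R : ℝ, IntegrableOn (fun x => ‖U x‖ ^ 2) (Set.Iic R) volume)
    (hV : ∀ R : ℝ, IntegrableOn (fun x => ‖V x‖ ^ 2) (Set.Ici R) volume)
    (hsup : ∃ M : ℝ, ∀ r : ℝ,
      (∫ x in Set.Iic r, ‖U x‖ ^ 2) * (∫ x in Set.Ici r, ‖V x‖ ^ 2) ≤ M) :
    ∃ C : ℝ, 0 < C ∧ ∀ f : ℝ → ℂ, MemLp f 2 volume →
      ∫ x : ℝ, ‖U x * ∫ y in Set.Ici x, V y * f y‖ ^ 2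
        ≤ C * ∫ x : ℝ, ‖f x‖ ^ 2 := by
  obtain ⟨M, hM⟩ := hsup
  have hM0 : 0 ≤ M := le_trans (mul_nonneg
    (integral_nonneg fun x => sq_nonneg _) (integral_nonneg fun x => sq_nonneg _)) (hM 0)
  refine ⟨16 * M + 1, by positivity, ?_⟩
  intro f hf
  -- replace f by a measurable representative
  obtain ⟨f', hf'sm, hff'⟩ := hf.1
  have hf'm : Measurable f' := hf'sm.measurable
  have hf' : MemLp f' 2 volume := hf.ae_eq hff'
  have hIeq : ∀ x : ℝ, (∫ y in Set.Ici x, V y * f y) = ∫ y in Set.Ici x, V y * f' y :=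
    fun x => integral_congr_ae ((ae_restrict_of_ae hff').mono fun y hy => by simp only [hy])
  have hReq : ∫ x : ℝ, ‖f x‖ ^ 2 = ∫ x : ℝ, ‖f' x‖ ^ 2 :=
    integral_congr_ae (hff'.mono fun y hy => by simp only [hy])
  rw [hReq]
  simp only [hIeq]
  -- ENNReal-valued data
  set u : ℝ → ℝ≥0∞ := fun x => (‖U x‖₊ : ℝ≥0∞) with hudef
  set v : ℝ → ℝ≥0∞ := fun x => (‖V x‖₊ : ℝ≥0∞) with hvdef
  set φ : ℝ → ℝ≥0∞ := fun x => (‖f' x‖₊ : ℝ≥0∞) with hphidef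
  have hum : Measurable u := hUm.nnnorm.coe_nnreal_ennreal
  have hvm : Measurable v := hVm.nnnorm.coe_nnreal_ennreal
  have hphim : Measurable φ := hf'm.nnnorm.coe_nnreal_ennreal
  set A : ℝ → ℝ≥0∞ := fun r => ∫⁻ z in Set.Iic r, u z ^ 2 with hAdef
  set B : ℝ → ℝ≥0∞ := fun r => ∫⁻ z in Set.Ici r, v z ^ 2 with hBdef
  have hAm : Measurable A :=
    Monotone.measurable (fun a b hab => lintegral_mono_set (Set.Iic_subset_Iic.mpr hab))
  have hBm : Measurable B :=
    Antitone.measurable (fun a b hab => lintegral_mono_set (Set.Ici_subset_Ici.mpr hab))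
  have hAfin : ∀ r, A r ≠ ∞ := by
    intro r
    have h1 : A r = ∫⁻ z in Set.Iic r, (‖(‖U z‖^2)‖₊ : ℝ≥0∞) :=
      lintegral_congr fun z => (nnnorm_sq_eq _).symm
    rw [h1]
    exact (hU r).2.ne
  have hBfin : ∀ r, B r ≠ ∞ := by
    intro r
    have h1 : B r = ∫⁻ z in Set.Ici r, (‖(‖V z‖^2)‖₊ : ℝ≥0∞) :=
      lintegral_congr fun z => (nnnorm_sq_eq _).symm
    rw [h1]
    exact (hV r).2.ne
  have hAeq : ∀ r, A r = ENNReal.ofReal (∫ x in Set.Iic r, ‖U x‖^2) := by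
    intro r
    have h1 : (∫ x in Set.Iic r, ‖U x‖^2) = (A r).toReal := by
      rw [integral_eq_lintegral_of_nonneg_ae (Filter.Eventually.of_forall fun x => sq_nonneg _)
        ((hUm.norm.pow_const 2).aestronglyMeasurable)]
      congr 1
      refine lintegral_congr fun x => ?_
      rw [ENNReal.ofReal_pow (norm_nonneg _), ofReal_norm, enorm_eq_nnnorm]
    rw [h1, ENNReal.ofReal_toReal (hAfin r)]
  have hBeq : ∀ r, B r = ENNReal.ofReal (∫ x in Set.Ici r, ‖V x‖^2) := by
    intro r
    have h1 : (∫ x in Set.Ici r, ‖V x‖^2) = (B r).toReal := by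
      rw [integral_eq_lintegral_of_nonneg_ae (Filter.Eventually.of_forall fun x => sq_nonneg _)
        ((hVm.norm.pow_const 2).aestronglyMeasurable)]
      congr 1
      refine lintegral_congr fun x => ?_
      rw [ENNReal.ofReal_pow (norm_nonneg _), ofReal_norm, enorm_eq_nnnorm]
    rw [h1, ENNReal.ofReal_toReal (hBfin r)]
  have hAB : ∀ r, A r * B r ≤ ENNReal.ofReal M := by
    intro r
    rw [hAeq r, hBeq r, ← ENNReal.ofReal_mul (integral_nonneg fun x => sq_nonneg _)]
    exact ENNReal.ofReal_le_ofReal (hM r)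
  -- the inner integral
  set I : ℝ → ℂ := fun x => ∫ y in Set.Ici x, V y * f' y with hIdef
  have hIm : StronglyMeasurable I := by
    have h1 : I = fun x => ∫ y, (Set.Ici x).indicator (fun y => V y * f' y) y := by
      funext x
      rw [integral_indicator measurableSet_Ici]
    rw [h1]
    apply MeasureTheory.StronglyMeasurable.integral_prod_right
      (f := fun x y => (Set.Ici x).indicator (fun y => V y * f' y) y)
    apply Measurable.stronglyMeasurable
    have h2 : (Function.uncurry fun x y => (Set.Ici x).indicator (fun y => V y * f' y) y)
        = ({q : ℝ × ℝ | q.1 ≤ q.2}).indicator (fun q => V q.2 * f' q.2) := by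
      funext p
      simp [Function.uncurry, Set.indicator_apply, Set.mem_Ici, Set.mem_setOf_eq]
    rw [h2]
    exact ((hVm.comp measurable_snd).mul (hf'm.comp measurable_snd)).indicator
      (measurableSet_le measurable_fst measurable_snd)
  -- Step 2 : rewrite LHS as a lintegral
  have hLHS : ∫ x : ℝ, ‖U x * I x‖^2
      = (∫⁻ x, u x^2 * ((‖I x‖₊ : ℝ≥0∞))^2).toReal := by
    rw [integral_eq_lintegral_of_nonneg_ae (f := fun x => ‖U x * I x‖^2) (Filter.Eventually.of_forall fun x => sq_nonneg _)
      (((hUm.mul hIm.measurable).norm.pow_const 2).aestronglyMeasurable)]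
    congr 1
    refine lintegral_congr fun x => ?_
    rw [ENNReal.ofReal_pow (norm_nonneg _), ofReal_norm, enorm_eq_nnnorm, nnnorm_mul,
      ENNReal.coe_mul, mul_pow]
  rw [hLHS]
  have hsqrt_sq : ∀ z : ℝ≥0∞, (z^((1/2):ℝ))^(2:ℕ) = z := by
    intro z
    rw [← ENNReal.rpow_natCast (z^((1/2):ℝ)) 2, ← ENNReal.rpow_mul]
    norm_num
  -- a.e. vanishing of v where B = 0
  have hv0 : ∀ᵐ y : ℝ, B y = 0 → v y = 0 := by
    filter_upwards [ae_zero_of_Ici_zero (fun z => v z ^ 2) (hvm.pow_const 2)] with y hy hBy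
    have h1 : v y ^ 2 = 0 := hy hBy
    exact pow_eq_zero_iff (two_ne_zero) |>.mp h1
  set H : ℝ → ℝ≥0∞ := fun x => ∫⁻ y in Set.Ici x, φ y^2 * (B y)^((1/2):ℝ) with hHdef
  have hIbound : ∀ x : ℝ, ((‖I x‖₊ : ℝ≥0∞))^2 ≤ 4 * (B x)^((1/2):ℝ) * H x := by
    intro x
    have h3 : (‖I x‖₊ : ℝ≥0∞) ≤ ∫⁻ y in Set.Ici x, v y * φ y := by
      refine le_trans (enorm_integral_le_lintegral_enorm _) (le_of_eq ?_)
      refine lintegral_congr fun y => ?_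
      exact enorm_mul _ _
    have h4 : ∫⁻ y in Set.Ici x, v y * φ y
        ≤ (∫⁻ y in Set.Ici x, v y^2 * (B y)^(-(1/2):ℝ))^(1/(2:ℝ))
          * (∫⁻ y in Set.Ici x, φ y^2 * (B y)^((1/2):ℝ))^(1/(2:ℝ)) := by
      have hconj : Real.HolderConjugate 2 2 := Real.HolderConjugate.two_two
      have step1 : ∫⁻ y in Set.Ici x, v y * φ y
          ≤ ∫⁻ y in Set.Ici x, (v y * (B y)^(-(1/4):ℝ)) * (φ y * (B y)^((1/4):ℝ)) := by
        refine lintegral_mono_ae ?_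
        filter_upwards [ae_restrict_of_ae hv0] with y hy
        rcases eq_or_ne (B y) 0 with hBy | hBy
        · simp [hy hBy]
        · apply le_of_eq
          have hcancel : (B y)^(-(1/4):ℝ) * (B y)^((1/4):ℝ) = 1 := by
            rw [← ENNReal.rpow_add _ _ hBy (hBfin y)]
            norm_num
          calc v y * φ y = (v y * φ y) * ((B y)^(-(1/4):ℝ) * (B y)^((1/4):ℝ)) := by
                rw [hcancel, mul_one]
            _ = (v y * (B y)^(-(1/4):ℝ)) * (φ y * (B y)^((1/4):ℝ)) := by ring
      have step2 := ENNReal.lintegral_mul_le_Lp_mul_Lq (volume.restrict (Set.Ici x)) hconj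
        ((hvm.mul (hBm.pow_const _)).aemeasurable)
        ((hphim.mul (hBm.pow_const _)).aemeasurable)
        (f := fun y => v y * (B y)^(-(1/4):ℝ)) (g := fun y => φ y * (B y)^((1/4):ℝ))
      have e2 : ∫⁻ y in Set.Ici x, (v y * (B y)^(-(1/4):ℝ))^(2:ℝ)
          = ∫⁻ y in Set.Ici x, v y^2 * (B y)^(-(1/2):ℝ) := by
        refine lintegral_congr fun y => ?_
        rw [ENNReal.mul_rpow_of_nonneg _ _ (by norm_num : (0:ℝ) ≤ 2), ← ENNReal.rpow_mul,
          rpow_two_eq]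
        norm_num
      have e3 : ∫⁻ y in Set.Ici x, (φ y * (B y)^((1/4):ℝ))^(2:ℝ)
          = ∫⁻ y in Set.Ici x, φ y^2 * (B y)^((1/2):ℝ) := by
        refine lintegral_congr fun y => ?_
        rw [ENNReal.mul_rpow_of_nonneg _ _ (by norm_num : (0:ℝ) ≤ 2), ← ENNReal.rpow_mul,
          rpow_two_eq]
        norm_num
      calc ∫⁻ y in Set.Ici x, v y * φ y
          ≤ ∫⁻ y in Set.Ici x, (v y * (B y)^(-(1/4):ℝ)) * (φ y * (B y)^((1/4):ℝ)) := step1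
        _ ≤ (∫⁻ y in Set.Ici x, (v y * (B y)^(-(1/4):ℝ))^(2:ℝ))^(1/(2:ℝ))
            * (∫⁻ y in Set.Ici x, (φ y * (B y)^((1/4):ℝ))^(2:ℝ))^(1/(2:ℝ)) := step2
        _ = _ := by rw [e2, e3]
    have h5 : ∫⁻ y in Set.Ici x, v y^2 * (B y)^(-(1/2):ℝ) ≤ 4 * (B x)^((1/2):ℝ) :=
      key_Ici (fun z => v z^2) (hvm.pow_const 2) x
    calc ((‖I x‖₊ : ℝ≥0∞))^2
        ≤ (∫⁻ y in Set.Ici x, v y * φ y)^2 := pow_le_pow_left' h3 2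
      _ ≤ ((∫⁻ y in Set.Ici x, v y^2 * (B y)^(-(1/2):ℝ))^(1/(2:ℝ))
            * (∫⁻ y in Set.Ici x, φ y^2 * (B y)^((1/2):ℝ))^(1/(2:ℝ)))^2 :=
          pow_le_pow_left' h4 2
      _ = (∫⁻ y in Set.Ici x, v y^2 * (B y)^(-(1/2):ℝ)) * H x := by
          rw [mul_pow]
          have e4 : (1/(2:ℝ)) = ((1/2):ℝ) := by norm_num
          rw [e4, hsqrt_sq, hsqrt_sq]
      _ ≤ (4 * (B x)^((1/2):ℝ)) * H x := mul_le_mul_left h5 _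
  have hHm : Measurable H :=
    Antitone.measurable (fun a b hab => lintegral_mono_set (Set.Ici_subset_Ici.mpr hab))
  -- Tonelli
  have hswap : ∫⁻ x, (u x^2 * (B x)^((1/2):ℝ)) * H x
      = ∫⁻ y, (∫⁻ x in Set.Iic y, u x^2 * (B x)^((1/2):ℝ)) * (φ y^2 * (B y)^((1/2):ℝ)) := by
    have hcm : Measurable (fun x => u x^2 * (B x)^((1/2):ℝ)) :=
      (hum.pow_const 2).mul (hBm.pow_const _)
    have hdm : Measurable (fun y => φ y^2 * (B y)^((1/2):ℝ)) :=
      (hphim.pow_const 2).mul (hBm.pow_const _)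
    have hFm : Measurable (Function.uncurry fun x y : ℝ =>
        if x ≤ y then (u x^2 * (B x)^((1/2):ℝ)) * (φ y^2 * (B y)^((1/2):ℝ)) else 0) := by
      have h1 : (Function.uncurry fun x y : ℝ =>
          if x ≤ y then (u x^2 * (B x)^((1/2):ℝ)) * (φ y^2 * (B y)^((1/2):ℝ)) else 0)
          = fun p : ℝ × ℝ =>
            if p.1 ≤ p.2 then (u p.1^2 * (B p.1)^((1/2):ℝ)) * (φ p.2^2 * (B p.2)^((1/2):ℝ))
            else 0 := rfl
      rw [h1]
      exact Measurable.ite (measurableSet_le measurable_fst measurable_snd)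
        ((hcm.comp measurable_fst).mul (hdm.comp measurable_snd)) measurable_const
    have e1 : ∀ x : ℝ, (u x^2 * (B x)^((1/2):ℝ)) * H x
        = ∫⁻ y, (if x ≤ y then (u x^2 * (B x)^((1/2):ℝ)) * (φ y^2 * (B y)^((1/2):ℝ)) else 0) := by
      intro x
      have h1 : (fun y => if x ≤ y then (u x^2 * (B x)^((1/2):ℝ)) * (φ y^2 * (B y)^((1/2):ℝ)) else 0)
          = (Set.Ici x).indicator
            (fun y => (u x^2 * (B x)^((1/2):ℝ)) * (φ y^2 * (B y)^((1/2):ℝ))) := by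
        funext y; simp [Set.indicator_apply, Set.mem_Ici]
      rw [h1, lintegral_indicator measurableSet_Ici, lintegral_const_mul _ hdm]
    have e2 : ∀ y : ℝ, (∫⁻ x, (if x ≤ y then (u x^2 * (B x)^((1/2):ℝ)) * (φ y^2 * (B y)^((1/2):ℝ)) else 0))
        = (∫⁻ x in Set.Iic y, u x^2 * (B x)^((1/2):ℝ)) * (φ y^2 * (B y)^((1/2):ℝ)) := by
      intro y
      have h1 : (fun x => if x ≤ y then (u x^2 * (B x)^((1/2):ℝ)) * (φ y^2 * (B y)^((1/2):ℝ)) else 0)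
          = (Set.Iic y).indicator
            (fun x => (u x^2 * (B x)^((1/2):ℝ)) * (φ y^2 * (B y)^((1/2):ℝ))) := by
        funext x; simp [Set.indicator_apply, Set.mem_Iic]
      rw [h1, lintegral_indicator measurableSet_Iic, lintegral_mul_const _ hcm]
    calc ∫⁻ x, (u x^2 * (B x)^((1/2):ℝ)) * H x
        = ∫⁻ x, ∫⁻ y, (if x ≤ y then (u x^2 * (B x)^((1/2):ℝ)) * (φ y^2 * (B y)^((1/2):ℝ)) else 0) :=
          lintegral_congr e1
      _ = ∫⁻ y, ∫⁻ x, (if x ≤ y then (u x^2 * (B x)^((1/2):ℝ)) * (φ y^2 * (B y)^((1/2):ℝ)) else 0) :=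
          lintegral_lintegral_swap hFm.aemeasurable
      _ = _ := lintegral_congr e2
  -- bound on the inner integral
  have hu0 : ∀ᵐ x : ℝ, A x = 0 → u x = 0 := by
    filter_upwards [ae_zero_of_Iic_zero (fun z => u z ^ 2) (hum.pow_const 2)] with x hx hAx
    exact pow_eq_zero_iff two_ne_zero |>.mp (hx hAx)
  have hcbound : ∀ᵐ x : ℝ, u x^2 * (B x)^((1/2):ℝ)
      ≤ (ENNReal.ofReal M)^((1/2):ℝ) * (u x^2 * (A x)^(-(1/2):ℝ)) := by
    filter_upwards [hu0] with x hx
    rcases eq_or_ne (A x) 0 with hAx | hAx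
    · rw [hx hAx]; simp
    · have h1 : (A x)^((1/2):ℝ) * (B x)^((1/2):ℝ) ≤ (ENNReal.ofReal M)^((1/2):ℝ) := by
        rw [← ENNReal.mul_rpow_of_nonneg _ _ (by norm_num : (0:ℝ) ≤ 1/2)]
        exact ENNReal.rpow_le_rpow (hAB x) (by norm_num)
      have h2 : (B x)^((1/2):ℝ) ≤ (ENNReal.ofReal M)^((1/2):ℝ) * (A x)^(-(1/2):ℝ) := by
        have hcancel : (A x)^(-(1/2):ℝ) * (A x)^((1/2):ℝ) = 1 := by
          rw [← ENNReal.rpow_add _ _ hAx (hAfin x)]; norm_num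
        calc (B x)^((1/2):ℝ)
            = ((A x)^(-(1/2):ℝ) * (A x)^((1/2):ℝ)) * (B x)^((1/2):ℝ) := by
              rw [hcancel, one_mul]
          _ = (A x)^(-(1/2):ℝ) * ((A x)^((1/2):ℝ) * (B x)^((1/2):ℝ)) := by ring
          _ ≤ (A x)^(-(1/2):ℝ) * (ENNReal.ofReal M)^((1/2):ℝ) := mul_le_mul_right h1 _
          _ = (ENNReal.ofReal M)^((1/2):ℝ) * (A x)^(-(1/2):ℝ) := mul_comm _ _
      calc u x^2 * (B x)^((1/2):ℝ)
          ≤ u x^2 * ((ENNReal.ofReal M)^((1/2):ℝ) * (A x)^(-(1/2):ℝ)) := mul_le_mul_right h2 _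
        _ = (ENNReal.ofReal M)^((1/2):ℝ) * (u x^2 * (A x)^(-(1/2):ℝ)) := by ring
  have hG : ∀ y : ℝ, ∫⁻ x in Set.Iic y, u x^2 * (B x)^((1/2):ℝ)
      ≤ (ENNReal.ofReal M)^((1/2):ℝ) * (4 * (A y)^((1/2):ℝ)) := by
    intro y
    calc ∫⁻ x in Set.Iic y, u x^2 * (B x)^((1/2):ℝ)
        ≤ ∫⁻ x in Set.Iic y, (ENNReal.ofReal M)^((1/2):ℝ) * (u x^2 * (A x)^(-(1/2):ℝ)) :=
          lintegral_mono_ae (ae_restrict_of_ae hcbound)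
      _ = (ENNReal.ofReal M)^((1/2):ℝ) * ∫⁻ x in Set.Iic y, u x^2 * (A x)^(-(1/2):ℝ) :=
          lintegral_const_mul _ ((hum.pow_const 2).mul (hAm.pow_const _))
      _ ≤ _ := mul_le_mul_right (key_Iic (fun z => u z^2) (hum.pow_const 2) y) _
  have hinner : ∀ y : ℝ, (∫⁻ x in Set.Iic y, u x^2 * (B x)^((1/2):ℝ)) * (B y)^((1/2):ℝ)
      ≤ 4 * ENNReal.ofReal M := by
    intro y
    calc (∫⁻ x in Set.Iic y, u x^2 * (B x)^((1/2):ℝ)) * (B y)^((1/2):ℝ)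
        ≤ ((ENNReal.ofReal M)^((1/2):ℝ) * (4 * (A y)^((1/2):ℝ))) * (B y)^((1/2):ℝ) :=
          mul_le_mul_left (hG y) _
      _ = 4 * ((ENNReal.ofReal M)^((1/2):ℝ) * ((A y)^((1/2):ℝ) * (B y)^((1/2):ℝ))) := by ring
      _ ≤ 4 * ((ENNReal.ofReal M)^((1/2):ℝ) * (ENNReal.ofReal M)^((1/2):ℝ)) := by
          refine mul_le_mul_right (mul_le_mul_right ?_ _) _
          rw [← ENNReal.mul_rpow_of_nonneg _ _ (by norm_num : (0:ℝ) ≤ 1/2)]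
          exact ENNReal.rpow_le_rpow (hAB y) (by norm_num)
      _ = 4 * ENNReal.ofReal M := by rw [← pow_two, hsqrt_sq]
  -- put everything together in ℝ≥0∞
  have hfinal : (∫⁻ x, u x^2 * ((‖I x‖₊ : ℝ≥0∞))^2)
      ≤ 16 * ENNReal.ofReal M * ∫⁻ y, φ y^2 := by
    calc ∫⁻ x, u x^2 * ((‖I x‖₊ : ℝ≥0∞))^2
        ≤ ∫⁻ x, 4 * ((u x^2 * (B x)^((1/2):ℝ)) * H x) := by
          refine lintegral_mono fun x => ?_
          calc u x^2 * ((‖I x‖₊ : ℝ≥0∞))^2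
              ≤ u x^2 * (4 * (B x)^((1/2):ℝ) * H x) := mul_le_mul_right (hIbound x) _
            _ = 4 * ((u x^2 * (B x)^((1/2):ℝ)) * H x) := by ring
      _ = 4 * ∫⁻ x, (u x^2 * (B x)^((1/2):ℝ)) * H x :=
          lintegral_const_mul (f := fun x => (u x^2 * (B x)^((1/2):ℝ)) * H x) _ (((hum.pow_const 2).mul (hBm.pow_const ((1/2):ℝ))).mul hHm)
      _ = 4 * ∫⁻ y, (∫⁻ x in Set.Iic y, u x^2 * (B x)^((1/2):ℝ)) * (φ y^2 * (B y)^((1/2):ℝ)) := by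
          rw [hswap]
      _ ≤ 4 * ∫⁻ y, (4 * ENNReal.ofReal M) * φ y^2 := by
          refine mul_le_mul_right (lintegral_mono fun y => ?_) _
          calc (∫⁻ x in Set.Iic y, u x^2 * (B x)^((1/2):ℝ)) * (φ y^2 * (B y)^((1/2):ℝ))
              = ((∫⁻ x in Set.Iic y, u x^2 * (B x)^((1/2):ℝ)) * (B y)^((1/2):ℝ)) * φ y^2 := by
                ring
            _ ≤ (4 * ENNReal.ofReal M) * φ y^2 := mul_le_mul_left (hinner y) _
      _ = 16 * ENNReal.ofReal M * ∫⁻ y, φ y^2 := by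
          rw [lintegral_const_mul _ (hphim.pow_const 2)]
          ring
  -- return to real integrals
  have hintf : Integrable (fun y => ‖f' y‖^2) volume := by
    have h1 := hf'.integrable_norm_rpow two_ne_zero ENNReal.ofNat_ne_top
    have h2 : (fun x => ‖f' x‖ ^ (2:ℝ≥0∞).toReal) = fun x => ‖f' x‖^2 := by
      funext x
      rw [ENNReal.toReal_ofNat, show (2:ℝ) = ((2:ℕ):ℝ) by norm_num, Real.rpow_natCast]
    rwa [h2] at h1
  have hphifin : ∫⁻ y, φ y^2 ≠ ∞ := by
    have h1 : ∫⁻ y, φ y^2 = ∫⁻ y, (‖(‖f' y‖^2)‖₊ : ℝ≥0∞) :=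
      lintegral_congr fun y => (nnnorm_sq_eq _).symm
    rw [h1]
    exact hintf.2.ne
  have hphieq : (∫⁻ y, φ y^2).toReal = ∫ x, ‖f' x‖^2 := by
    rw [integral_eq_lintegral_of_nonneg_ae (Filter.Eventually.of_forall fun x => sq_nonneg _)
      ((hf'm.norm.pow_const 2).aestronglyMeasurable)]
    congr 1
    refine lintegral_congr fun x => ?_
    rw [ENNReal.ofReal_pow (norm_nonneg _), ofReal_norm, enorm_eq_nnnorm]
  have hfinR : (∫⁻ x, u x^2 * ((‖I x‖₊ : ℝ≥0∞))^2).toReal ≤ 16 * M * ∫ x, ‖f' x‖^2 := by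
    have h2 : (16 * ENNReal.ofReal M * ∫⁻ y, φ y^2).toReal = 16 * M * ∫ x, ‖f' x‖^2 := by
      rw [ENNReal.toReal_mul, ENNReal.toReal_mul, hphieq, ENNReal.toReal_ofReal hM0]
      norm_num
    rw [← h2]
    apply ENNReal.toReal_mono
    · exact ENNReal.mul_ne_top (ENNReal.mul_ne_top (by norm_num) ENNReal.ofReal_ne_top) hphifin
    · exact hfinal
  refine le_trans hfinR ?_
  have hnn : 0 ≤ ∫ x, ‖f' x‖^2 := integral_nonneg fun x => sq_nonneg _
  nlinarith
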